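/- For α > 2 and s > 0, the integral ∫₀^∞ (1 - 1/(1 + s·x^{-α}))·2πλ·x dx converges and equals πλ·s^{2/α}·(2π/α)/sin(2π/α), i.e., πλ·s^{2/α}/sinc(2/α) where sinc(t) = sin(πt)/(πt). -/

import Mathlib

open MeasureTheory Real Set

lemma beta_val {c : ℝ} (h0 : 0 < c) (h1 : c < 1) :
    ∫ x in Ioo (0:ℝ) 1, x ^ (c-1) * (1-x) ^ (-c) = π / Real.sin (π * c) := by
  have hB : Complex.betaIntegral c (1-c) = ((π / Real.sin (π * c) : ℝ) : ℂ) := by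
    have h := Complex.Gamma_mul_Gamma_eq_betaIntegral (s := (c:ℂ)) (t := 1 - (c:ℂ))
      (by simpa using h0) (by simp [Complex.sub_re]; linarith)
    have h2 := Complex.Gamma_mul_Gamma_one_sub (c:ℂ)
    rw [h2] at h
    have h3 : (c:ℂ) + (1 - c) = 1 := by ring
    rw [h3, Complex.Gamma_one, one_mul] at h
    rw [← h]
    push_cast [Complex.ofReal_sin]
    rfl
  have hI : Complex.betaIntegral c (1-c)
      = ((∫ x in (0:ℝ)..1, x ^ (c-1) * (1-x) ^ (-c) : ℝ) : ℂ) := by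
    rw [Complex.betaIntegral, ← intervalIntegral.integral_ofReal]
    apply intervalIntegral.integral_congr
    intro x hx
    rw [uIcc_of_le zero_le_one] at hx
    simp only
    have hx0 : (0:ℝ) ≤ x := hx.1
    have hx1 : (0:ℝ) ≤ 1 - x := by linarith [hx.2]
    rw [show ((c:ℂ) - 1) = ((c - 1 : ℝ) : ℂ) by push_cast; ring,
      show (1 - (c:ℂ) - 1) = ((-c : ℝ) : ℂ) by push_cast; ring,
      show (1 - (x:ℂ)) = ((1 - x : ℝ) : ℂ) by push_cast; ring,
      Complex.ofReal_mul, ← Complex.ofReal_cpow hx0, ← Complex.ofReal_cpow hx1]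
  have := hB.symm.trans hI
  have hreal : (∫ x in (0:ℝ)..1, x ^ (c-1) * (1-x) ^ (-c) : ℝ) = π / Real.sin (π * c) := by
    exact_mod_cast this.symm
  rw [← hreal, intervalIntegral.integral_of_le zero_le_one,
    MeasureTheory.integral_Ioc_eq_integral_Ioo]

lemma base_val {c : ℝ} (h0 : 0 < c) (h1 : c < 1) :
    ∫ t in Ioi (0:ℝ), t ^ (c-1) / (1+t) = π / Real.sin (π * c) := by
  set f : ℝ → ℝ := fun x => x / (1 - x) with hf
  have himg : f '' Ioo 0 1 = Ioi 0 := by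
    ext y; constructor
    · rintro ⟨x, ⟨hx0, hx1⟩, rfl⟩
      exact div_pos hx0 (by linarith)
    · intro hy
      have hy' : (0:ℝ) < y := hy
      refine ⟨y / (1 + y), ⟨div_pos hy' (by linarith), (div_lt_one (by linarith)).mpr (by linarith)⟩, ?_⟩
      show y / (1+y) / (1 - y/(1+y)) = y
      have : 1 - y/(1+y) = (1+y)⁻¹ := by field_simp; ring
      rw [this]
      field_simp
  have hderiv : ∀ x ∈ Ioo (0:ℝ) 1, HasDerivWithinAt f (((1-x)^2)⁻¹) (Ioo 0 1) x := by
    intro x hx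
    have hne : (1:ℝ) - x ≠ 0 := by have := hx.2; intro h; simp at hx; linarith
    have : HasDerivAt f ((1 * (1-x) - x * (0 - 1)) / (1-x)^2) x :=
      (hasDerivAt_id x).div ((hasDerivAt_const x 1).sub (hasDerivAt_id x)) hne
    have h2 : (1 * (1-x) - x * (0 - 1)) / (1-x)^2 = ((1-x)^2)⁻¹ := by
      field_simp
      ring
    rw [h2] at this
    exact this.hasDerivWithinAt
  have hinj : InjOn f (Ioo 0 1) := by
    intro a ha b hb hab
    have ha' : (1:ℝ) - a ≠ 0 := by have := ha.2; intro h; linarith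
    have hb' : (1:ℝ) - b ≠ 0 := by have := hb.2; intro h; linarith
    simp only [hf] at hab
    field_simp at hab
    nlinarith [hab]
  have key := integral_image_eq_integral_abs_deriv_smul measurableSet_Ioo hderiv hinj
    (fun t => t^(c-1)/(1+t))
  rw [himg] at key
  rw [key, ← beta_val h0 h1]
  apply setIntegral_congr_fun measurableSet_Ioo
  intro x hx
  have hx0 : (0:ℝ) < x := hx.1
  have h1x : (0:ℝ) < 1 - x := by have := hx.2; linarith
  have e1 : 1 + x/(1-x) = (1-x)⁻¹ := by field_simp; ring
  have e2 : (x/(1-x))^(c-1) = x^(c-1) * ((1-x)^(c-1))⁻¹ := by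
    rw [Real.div_rpow hx0.le h1x.le, div_eq_mul_inv]
  show |((1-x)^2)⁻¹| • ((x/(1-x))^(c-1) / (1 + x/(1-x))) = x^(c-1) * (1-x)^(-c)
  rw [smul_eq_mul, abs_of_pos (by positivity), e1, e2, Real.rpow_neg h1x.le]
  have k1 : ((1:ℝ)-x)^(2:ℕ) = (1-x)^(2:ℝ) := by
    rw [← Real.rpow_natCast (1-x) 2]; norm_num
  have k2 : (1-x)^(2:ℝ) * (1-x)^(c-1) = (1-x)^c * (1-x) := by
    rw [← Real.rpow_add h1x, show (2 + (c-1) : ℝ) = c + 1 by ring, Real.rpow_add h1x,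
      Real.rpow_one]
  have p1 : (0:ℝ) < (1-x)^(2:ℝ) := Real.rpow_pos_of_pos h1x _
  have p2 : (0:ℝ) < (1-x)^(c-1) := Real.rpow_pos_of_pos h1x _
  have p3 : (0:ℝ) < (1-x)^c := Real.rpow_pos_of_pos h1x _
  rw [k1]
  have hd : (1:ℝ) - x ≠ 0 := h1x.ne'
  generalize hg : ((1:ℝ)-x)^(2:ℝ) = g at k2 p1
  set a := x^(c-1) with ha
  set b := ((1:ℝ)-x)^(c-1) with hb
  set e := ((1:ℝ)-x)^c with he
  field_simp
  linear_combination (-a) * k2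

lemma base_cont {c : ℝ} : ContinuousOn (fun t : ℝ => t ^ (c-1) / (1+t)) (Ioi 0) := by
  apply ContinuousOn.div
  · exact fun t ht => (Real.continuousAt_rpow_const t (c-1) (Or.inl (ne_of_gt ht))).continuousWithinAt
  · fun_prop
  · intro t ht; have : (0:ℝ) < t := ht; positivity

lemma base_int {c : ℝ} (h0 : 0 < c) (h1 : c < 1) :
    IntegrableOn (fun t : ℝ => t ^ (c-1) / (1+t)) (Ioi 0) := by
  have hsplit : Ioi (0:ℝ) = Ioc 0 1 ∪ Ioi 1 := (Ioc_union_Ioi_eq_Ioi zero_le_one).symm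
  rw [hsplit]
  apply IntegrableOn.union
  · have hdom : IntegrableOn (fun t : ℝ => t ^ (c-1)) (Ioc 0 1) := by
      apply ((intervalIntegral.integrableOn_Ioo_rpow_iff (by norm_num : (0:ℝ) < 2)).mpr
        (by linarith : (-1:ℝ) < c - 1)).mono_set
      intro t ht
      exact ⟨ht.1, lt_of_le_of_lt ht.2 one_lt_two⟩
    apply Integrable.mono' hdom
    · exact (base_cont.mono (fun t ht => ht.1)).aestronglyMeasurable measurableSet_Ioc
    · filter_upwards [MeasureTheory.ae_restrict_mem measurableSet_Ioc] with t ht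
      have ht0 : (0:ℝ) < t := ht.1
      rw [Real.norm_eq_abs, abs_of_nonneg (by positivity)]
      apply div_le_of_le_mul₀ (by positivity) (by positivity)
      nlinarith [Real.rpow_pos_of_pos ht0 (c-1)]
  · have hdom : IntegrableOn (fun t : ℝ => t ^ (c-2)) (Ioi 1) :=
      (integrableOn_Ioi_rpow_iff one_pos).mpr (by linarith)
    apply Integrable.mono' hdom
    · exact (base_cont.mono (fun t (ht : t ∈ Ioi (1:ℝ)) => (lt_trans one_pos ht : (0:ℝ) < t))).aestronglyMeasurable
        measurableSet_Ioi
    · filter_upwards [MeasureTheory.ae_restrict_mem measurableSet_Ioi] with t ht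
      have ht0 : (0:ℝ) < t := lt_trans one_pos ht
      rw [Real.norm_eq_abs, abs_of_nonneg (by positivity)]
      have : t ^ (c-2) = t ^ (c-1) / t := by
        rw [show (c - 2 : ℝ) = (c-1) - 1 by ring, Real.rpow_sub ht0, Real.rpow_one]
      rw [this]
      apply div_le_div_of_nonneg_left (by positivity) ht0
      linarith

/-- For `α > 2`, `s > 0`, `λ > 0`, the integral `∫₀^∞ (1 - 1/(1 + s x^{-α}))·2πλx dx` converges
and equals `πλ s^{2/α} (2π/α)/sin(2π/α) = πλ s^{2/α}/sinc(2/α)`. -/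
theorem stmt_4 (α s lam : ℝ) (hα : 2 < α) (hs : 0 < s) (hlam : 0 < lam) :
    IntegrableOn (fun x : ℝ => (1 - 1 / (1 + s * x ^ (-α))) * (2 * π * lam * x)) (Ioi 0) ∧
    (∫ x in Ioi (0 : ℝ), (1 - 1 / (1 + s * x ^ (-α))) * (2 * π * lam * x)) =
      π * lam * s ^ (2 / α) * ((2 * π / α) / Real.sin (2 * π / α)) ∧
    π * lam * s ^ (2 / α) * ((2 * π / α) / Real.sin (2 * π / α)) =
      π * lam * s ^ (2 / α) / (Real.sin (π * (2 / α)) / (π * (2 / α))) := by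
  have hα0 : (0:ℝ) < α := by linarith
  set c : ℝ := 2 / α with hc
  have hc0 : 0 < c := by positivity
  have hc1 : c < 1 := by rw [hc, div_lt_one hα0]; linarith
  have hαc : α * c = 2 := by rw [hc]; field_simp
  set g : ℝ → ℝ := fun y => y ^ (c-1) / (y + s) with hg
  -- g ∘ (s * ·) in terms of the base integrand
  have hgs : EqOn (fun t => (s^(c-1)/s) * (t ^ (c-1) / (1+t))) (fun t => g (s*t)) (Ioi 0) := by
    intro t ht
    have ht0 : (0:ℝ) < t := ht
    simp only [hg]
    rw [Real.mul_rpow hs.le ht0.le]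
    have h1t : (0:ℝ) < 1 + t := by linarith
    field_simp
    ring
  have hI1 : IntegrableOn (fun t => g (s*t)) (Ioi 0) :=
    MeasureTheory.IntegrableOn.congr_fun ((base_int hc0 hc1).const_mul (s^(c-1)/s))
      hgs measurableSet_Ioi
  have hIg : IntegrableOn g (Ioi 0) := by
    have := (integrableOn_Ioi_comp_mul_left_iff g 0 hs).mp hI1
    rwa [mul_zero] at this
  -- key pointwise computation
  have hkey : ∀ x : ℝ, x ∈ Ioi (0:ℝ) → x ^ (α-1) * g (x^α) = x / (x^α + s) := by
    intro x hx
    have hx0 : (0:ℝ) < x := hx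
    simp only [hg]
    rw [← Real.rpow_mul hx0.le, show α * (c-1) = 2 - α by rw [mul_sub]; rw [hαc]; ring,
      ← mul_div_assoc, ← Real.rpow_add hx0, show α - 1 + (2 - α) = 1 by ring, Real.rpow_one]
  -- integrability of x / (x^α + s)
  have hIF : IntegrableOn (fun x : ℝ => x / (x ^ α + s)) (Ioi 0) := by
    have h3 := (integrableOn_Ioi_comp_rpow_iff' g (ne_of_gt hα0)).mpr hIg
    refine MeasureTheory.IntegrableOn.congr_fun h3 ?_ measurableSet_Ioi
    intro x hx
    simpa [smul_eq_mul] using hkey x hx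
  -- original integrand equals the simplified one on Ioi 0
  have horig : EqOn (fun x : ℝ => (1 - 1 / (1 + s * x ^ (-α))) * (2 * π * lam * x))
      (fun x : ℝ => (2 * π * lam * s) * (x / (x ^ α + s))) (Ioi 0) := by
    intro x hx
    have hx0 : (0:ℝ) < x := hx
    have hy : (0:ℝ) < x ^ α := Real.rpow_pos_of_pos hx0 α
    simp only
    rw [Real.rpow_neg hx0.le]
    have hden : (0:ℝ) < 1 + s * (x ^ α)⁻¹ := by positivity
    field_simp
    ring
  refine ⟨?_, ?_, ?_⟩
  · exact MeasureTheory.IntegrableOn.congr_fun (hIF.const_mul (2 * π * lam * s))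
      horig.symm measurableSet_Ioi
  · -- the value
    have hsin : Real.sin (π * c) ≠ 0 := by
      apply ne_of_gt
      apply Real.sin_pos_of_pos_of_lt_pi (by positivity)
      nlinarith [Real.pi_pos, hc1, hc0]
    have harg : π * c = 2 * π / α := by rw [hc]; ring
    set G : ℝ → ℝ := fun y => (2 * π * lam * s / α) * g y with hG
    have hsub := integral_comp_rpow_Ioi_of_pos (g := G) hα0
    have hL : EqOn (fun x : ℝ => (α * x ^ (α-1)) • G (x ^ α))
        (fun x : ℝ => (2 * π * lam * s) * (x / (x ^ α + s))) (Ioi 0) := by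
      intro x hx
      simp only [hG, smul_eq_mul]
      rw [← hkey x hx]
      field_simp
    have e0 : (∫ x in Ioi (0:ℝ), (1 - 1 / (1 + s * x ^ (-α))) * (2 * π * lam * x))
        = ∫ x in Ioi (0:ℝ), (α * x ^ (α-1)) • G (x ^ α) := by
      rw [setIntegral_congr_fun measurableSet_Ioi horig,
        setIntegral_congr_fun measurableSet_Ioi hL]
    -- compute ∫ g
    have eg : (∫ y in Ioi (0:ℝ), g y) = s ^ (c-1) * (π / Real.sin (π * c)) := by
      have h4 := integral_comp_mul_left_Ioi g 0 hs
      rw [mul_zero] at h4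
      have h5 : (∫ t in Ioi (0:ℝ), g (s * t))
          = (s^(c-1)/s) * (π / Real.sin (π * c)) := by
        rw [← setIntegral_congr_fun measurableSet_Ioi hgs,
          MeasureTheory.integral_const_mul, base_val hc0 hc1]
      rw [h5, smul_eq_mul] at h4
      have h6 := congrArg (fun z => s * z) h4
      simp only [← mul_assoc, mul_inv_cancel₀ hs.ne', one_mul] at h6
      rw [← h6]
      field_simp
    have esc : s ^ c = s * s ^ (c - 1) := by
      nth_rewrite 1 [show c = 1 + (c-1) by ring]
      rw [Real.rpow_add hs, Real.rpow_one]
    rw [e0, hsub, hG, MeasureTheory.integral_const_mul, eg, ← harg, esc]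
    field_simp [hα0.ne']
    ring_nf
    exact hαc.symm
  · rw [show π * (2/α) = 2 * π / α by ring, div_div_eq_mul_div]
    ring
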